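/- Let A, B : ℂ^n × ℂ^n → ℂ be sesquilinear forms (linear in the first argument and conjugate-linear in the second). There exists a homeomorphism φ : ℂ^n → ℂ^n such that A(u,v) = B(φ u, φ v) for all u, v ∈ ℂ^n if and only if there exists a linear bijection ψ : ℂ^n → ℂ^n such that A(u,v) = B(ψ u, ψ v) for all u, v ∈ ℂ^n. -/

import Mathlib

noncomputable def TBmap (n : ℕ)
    (B : (Fin n → ℂ) →ₗ[ℂ] (Fin n → ℂ) →ₛₗ[starRingEnd ℂ] ℂ) :
    (Fin n → ℂ) →ₗ[ℂ] ((Fin n → ℂ) → ℂ) × ((Fin n → ℂ) → ℂ) where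
  toFun y := (fun v => B y v, fun v => starRingEnd ℂ (B v y))
  map_add' x y := by
    ext v <;> simp
  map_smul' c x := by
    ext v <;> simp [mul_comm]

lemma aux_exists_equiv_comp {V W : Type*} [AddCommGroup V] [Module ℂ V]
    [FiniteDimensional ℂ V] [AddCommGroup W] [Module ℂ W]
    (f g : V →ₗ[ℂ] W) (h : LinearMap.range f = LinearMap.range g) :
    ∃ e : V ≃ₗ[ℂ] V, ∀ x, g (e x) = f x := by
  obtain ⟨C₁, hC₁⟩ := Submodule.exists_isCompl (LinearMap.ker f)
  obtain ⟨C₂, hC₂⟩ := Submodule.exists_isCompl (LinearMap.ker g)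
  have hk : Module.finrank ℂ (LinearMap.ker f) = Module.finrank ℂ (LinearMap.ker g) := by
    have h1 := LinearMap.finrank_range_add_finrank_ker f
    have h2 := LinearMap.finrank_range_add_finrank_ker g
    rw [h] at h1
    omega
  obtain ⟨θ⟩ := FiniteDimensional.nonempty_linearEquiv_of_finrank_eq hk
  set iso₁ : C₁ ≃ₗ[ℂ] LinearMap.range f :=
    (Submodule.quotientEquivOfIsCompl _ _ hC₁).symm.trans f.quotKerEquivRange with hiso₁
  set iso₂ : C₂ ≃ₗ[ℂ] LinearMap.range g :=
    (Submodule.quotientEquivOfIsCompl _ _ hC₂).symm.trans g.quotKerEquivRange with hiso₂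
  have hiso₁apply : ∀ c : C₁, (iso₁ c : W) = f c := by
    intro c
    simp [hiso₁, Submodule.quotientEquivOfIsCompl_symm_apply]
  have hiso₂apply : ∀ c : C₂, (iso₂ c : W) = g c := by
    intro c
    simp [hiso₂, Submodule.quotientEquivOfIsCompl_symm_apply]
  set γ : C₁ ≃ₗ[ℂ] C₂ := (iso₁.trans (LinearEquiv.ofEq _ _ h)).trans iso₂.symm with hγ
  have hγapply : ∀ c : C₁, g (γ c) = f c := by
    intro c
    have : (iso₂ (γ c) : W) = (iso₁ c : W) := by
      simp only [hγ, LinearEquiv.trans_apply, LinearEquiv.apply_symm_apply]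
      rfl
    rw [hiso₂apply, hiso₁apply] at this
    exact this
  set e : V ≃ₗ[ℂ] V :=
    ((Submodule.prodEquivOfIsCompl _ _ hC₁).symm.trans (θ.prodCongr γ)).trans
      (Submodule.prodEquivOfIsCompl _ _ hC₂) with he
  refine ⟨e, fun x => ?_⟩
  obtain ⟨kc, hkc⟩ : ∃ kc : (LinearMap.ker f × C₁),
      (Submodule.prodEquivOfIsCompl _ _ hC₁).symm x = kc := ⟨_, rfl⟩
  have hx : (kc.1 : V) + (kc.2 : V) = x := by
    have := congrArg (Submodule.prodEquivOfIsCompl _ _ hC₁) hkc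
    rw [LinearEquiv.apply_symm_apply, Submodule.coe_prodEquivOfIsCompl'] at this
    exact this.symm
  have hex : e x = (θ kc.1 : V) + (γ kc.2 : V) := by
    rw [he]
    simp only [LinearEquiv.trans_apply, hkc]
    rw [show (θ.prodCongr γ) kc = (θ kc.1, γ kc.2) from rfl,
      Submodule.coe_prodEquivOfIsCompl']
  rw [hex, map_add]
  have h0 : g (θ kc.1 : V) = 0 := LinearMap.mem_ker.mp (θ kc.1).2
  have hfk : f (kc.1 : V) = 0 := LinearMap.mem_ker.mp kc.1.2
  rw [h0, hγapply, zero_add, ← hx, map_add, hfk, zero_add]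

/-- Two sesquilinear forms `A, B : ℂ^n × ℂ^n → ℂ` (linear in the first argument,
conjugate-linear in the second) are topologically equivalent (via a homeomorphism `φ`)
if and only if they are equivalent (via a linear bijection `ψ`). -/
theorem stmt_2 (n : ℕ)
    (A B : (Fin n → ℂ) →ₗ[ℂ] (Fin n → ℂ) →ₛₗ[starRingEnd ℂ] ℂ) :
    (∃ φ : (Fin n → ℂ) ≃ₜ (Fin n → ℂ), ∀ u v, A u v = B (φ u) (φ v)) ↔
    (∃ ψ : (Fin n → ℂ) ≃ₗ[ℂ] (Fin n → ℂ), ∀ u v, A u v = B (ψ u) (ψ v)) := by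
  constructor
  · rintro ⟨φ, h⟩
    have key1 : ∀ x v, B (φ x) v = A x (φ.symm v) := by
      intro x v
      rw [h x (φ.symm v), Homeomorph.apply_symm_apply]
    have key2 : ∀ x v, B v (φ x) = A (φ.symm v) x := by
      intro x v
      rw [h (φ.symm v) x, Homeomorph.apply_symm_apply]
    set T : (Fin n → ℂ) →ₗ[ℂ] ((Fin n → ℂ) → ℂ) × ((Fin n → ℂ) → ℂ) :=
      { toFun := fun x => TBmap n B (φ x)
        map_add' := by
          intro x y
          ext v <;> simp [TBmap, key1, key2, map_add]
        map_smul' := by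
          intro c x
          ext v <;> simp [TBmap, key1, key2, mul_comm] } with hT
    have hrange : LinearMap.range T = LinearMap.range (TBmap n B) := by
      apply le_antisymm
      · rintro w ⟨x, rfl⟩
        exact ⟨φ x, rfl⟩
      · rintro w ⟨y, rfl⟩
        exact ⟨φ.symm y, by simp [hT]⟩
    obtain ⟨e, he⟩ := aux_exists_equiv_comp T (TBmap n B) hrange
    refine ⟨e, fun u v => ?_⟩
    have h1 : ∀ x w, B (e x) w = B (φ x) w := by
      intro x w
      exact congrFun (congrArg Prod.fst (he x)) w
    have h2 : ∀ x w, B w (e x) = B w (φ x) := by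
      intro x w
      have := congrFun (congrArg Prod.snd (he x)) w
      exact (starRingEnd ℂ).injective this
    rw [h u v, ← h2 v (φ u), ← h1 u (e v)]
  · rintro ⟨ψ, h⟩
    exact ⟨ψ.toContinuousLinearEquiv.toHomeomorph, h⟩
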